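/- arXiv:2012.00427 — 3 statements merged into one kernel-verified Lean document; each statement's English description precedes it below -/
import Mathlib

section
/- Let (Z, μ) be a finite measure space and G : Z × Z → ℝ≥0 a measurable kernel such that ∫∫_{Z×Z} exp(ε₀·G(ξ,η)) dμ(ξ) dμ(η) < ∞ for some ε₀ > 0. Let φ : Z → ℂ be a bounded measurable function with ∫_Z φ dμ = 0, and suppose there is ε₁ > 0 such that for every ε with 0 < ε < ε₁ the number ∫∫_{Z×Z} φ(ξ)·conj(φ(η))·exp(ε·G(ξ,η)) dμ(ξ) dμ(η) is a nonnegative real number. Then ∫∫_{Z×Z} φ(ξ)·conj(φ(η))·G(ξ,η) dμ(ξ) dμ(η) is a nonnegative real number. -/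
open MeasureTheory Filter
open scoped ENNReal NNReal

open scoped Topology

/-- If `exp (ε₀ G)` is integrable on `Z × Z` for some `ε₀ > 0`, `φ` is a
bounded measurable mean-zero function, and the quadratic quantities
`∫∫ φ(ξ) φ̄(η) exp (ε G(ξ,η))` are nonnegative reals for all small `ε > 0`, then
`∫∫ φ(ξ) φ̄(η) G(ξ,η)` is a nonnegative real number. -/
theorem stmt3 {Z : Type*} [MeasurableSpace Z]
    (μ : Measure Z) [IsFiniteMeasure μ]
    (G : Z × Z → ℝ≥0) (hG : Measurable G)
    (ε₀ : ℝ) (hε₀ : 0 < ε₀)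
    (hint : Integrable (fun p : Z × Z => Real.exp (ε₀ * (G p : ℝ))) (μ.prod μ))
    (φ : Z → ℂ) (hφ : Measurable φ) (hbd : ∃ M : ℝ, ∀ z : Z, ‖φ z‖ ≤ M)
    (hmean : ∫ z : Z, φ z ∂μ = 0)
    (ε₁ : ℝ) (hε₁ : 0 < ε₁)
    (hpos : ∀ ε : ℝ, 0 < ε → ε < ε₁ → ∃ r : ℝ, 0 ≤ r ∧
      ∫ p : Z × Z, φ p.1 * (starRingEnd ℂ) (φ p.2) *
        ((Real.exp (ε * (G p : ℝ)) : ℝ) : ℂ) ∂(μ.prod μ) = (r : ℂ)) :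
    ∃ r : ℝ, 0 ≤ r ∧
      ∫ p : Z × Z, φ p.1 * (starRingEnd ℂ) (φ p.2) * ((G p : ℝ) : ℂ) ∂(μ.prod μ) = (r : ℂ) := by
  classical
  obtain ⟨M, hM⟩ := hbd
  set c : ℝ := min ε₀ ε₁ / 2 with hcdef
  have hc0 : 0 < c := by
    have := lt_min hε₀ hε₁
    positivity
  set e : ℕ → ℝ := fun n => c / (n + 1) with hedef
  have he0 : ∀ n, 0 < e n := fun n => div_pos hc0 (by positivity)
  have hec : ∀ n, e n ≤ c := fun n =>
    div_le_self hc0.le (by have := Nat.cast_nonneg (α := ℝ) n; linarith)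
  have hcε₀ : c ≤ ε₀ / 2 := by
    rw [hcdef]
    have : min ε₀ ε₁ ≤ ε₀ := min_le_left _ _
    linarith
  have hcε₁ : c < ε₁ := by
    rw [hcdef]
    have : min ε₀ ε₁ ≤ ε₁ := min_le_right _ _
    linarith
  have heε₀ : ∀ n, e n ≤ ε₀ / 2 := fun n => (hec n).trans hcε₀
  have heε₁ : ∀ n, e n < ε₁ := fun n => lt_of_le_of_lt (hec n) hcε₁
  -- choose the nonnegative reals
  choose r hr0 hr using fun n => hpos (e n) (he0 n) (heε₁ n)
  -- the mean-zero product integral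
  have hφφ_meas : Measurable fun p : Z × Z => φ p.1 * (starRingEnd ℂ) (φ p.2) :=
    (hφ.comp measurable_fst).mul (Complex.continuous_conj.measurable.comp (hφ.comp measurable_snd))
  have hM0 : ∀ p : Z × Z, ‖φ p.1 * (starRingEnd ℂ) (φ p.2)‖ ≤ M * M := by
    intro p
    rw [norm_mul, RCLike.norm_conj]
    exact mul_le_mul (hM p.1) (hM p.2) (norm_nonneg _) ((norm_nonneg _).trans (hM p.1))
  have hφφ_int : Integrable (fun p : Z × Z => φ p.1 * (starRingEnd ℂ) (φ p.2)) (μ.prod μ) := by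
    refine Integrable.mono' (integrable_const (M * M)) hφφ_meas.aestronglyMeasurable ?_
    exact Filter.Eventually.of_forall hM0
  have hzero : ∫ p : Z × Z, φ p.1 * (starRingEnd ℂ) (φ p.2) ∂(μ.prod μ) = 0 := by
    rw [integral_prod_mul φ fun z => (starRingEnd ℂ) (φ z)]
    rw [integral_conj, hmean]
    simp
  -- integrability of the exponential-weighted integrand
  have hintε : ∀ ε : ℝ, 0 ≤ ε → ε ≤ ε₀ →
      Integrable (fun p : Z × Z => φ p.1 * (starRingEnd ℂ) (φ p.2) *
        ((Real.exp (ε * (G p : ℝ)) : ℝ) : ℂ)) (μ.prod μ) := by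
    intro ε hε hεε₀
    refine Integrable.mono' (hint.const_mul (M * M)) ?_ ?_
    · exact (hφφ_meas.mul (Complex.measurable_ofReal.comp
        ((hG.coe_nnreal_real.const_mul ε).exp))).aestronglyMeasurable
    · refine Filter.Eventually.of_forall fun p => ?_
      rw [norm_mul, Complex.norm_real, Real.norm_eq_abs,
        abs_of_pos (Real.exp_pos _)]
      have h1 : Real.exp (ε * (G p : ℝ)) ≤ Real.exp (ε₀ * (G p : ℝ)) :=
        Real.exp_le_exp.mpr (mul_le_mul_of_nonneg_right hεε₀ (G p).coe_nonneg)
      have h2 := hM0 p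
      have h3 : (0:ℝ) ≤ ‖φ p.1 * (starRingEnd ℂ) (φ p.2)‖ := norm_nonneg _
      nlinarith [Real.exp_pos (ε * (G p : ℝ))]
  -- the difference quotient integrands
  set F : ℕ → Z × Z → ℂ := fun n p => φ p.1 * (starRingEnd ℂ) (φ p.2) *
    (((Real.exp (e n * (G p : ℝ)) - 1) / e n : ℝ) : ℂ) with hFdef
  -- value of ∫ F n
  have hFval : ∀ n, ∫ p, F n p ∂(μ.prod μ) = ((r n / e n : ℝ) : ℂ) := by
    intro n
    have hEq : F n = fun p => ((e n)⁻¹ : ℂ) *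
        ((φ p.1 * (starRingEnd ℂ) (φ p.2) * ((Real.exp (e n * (G p : ℝ)) : ℝ) : ℂ)) -
          φ p.1 * (starRingEnd ℂ) (φ p.2)) := by
      funext p
      rw [hFdef]
      push_cast
      field_simp
    rw [hEq, integral_const_mul, integral_sub (hintε (e n) (he0 n).le (by linarith [heε₀ n])) hφφ_int,
      hzero, hr n]
    push_cast
    field_simp
    ring
  -- pointwise convergence of the difference quotient
  have hlim0 : Tendsto e atTop (𝓝 0) := by
    have h := tendsto_const_div_atTop_nhds_zero_nat c
    have h2 : Tendsto (fun n : ℕ => (n : ℝ) + 1) atTop atTop :=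
      tendsto_atTop_add_const_right _ 1 tendsto_natCast_atTop_atTop
    exact Tendsto.div_atTop tendsto_const_nhds h2
  have hslope : ∀ g : ℝ, 0 ≤ g →
      Tendsto (fun n => (Real.exp (e n * g) - 1) / e n) atTop (𝓝 g) := by
    intro g _
    have hd : HasDerivAt (fun t : ℝ => Real.exp (t * g)) g 0 := by
      have h := ((hasDerivAt_id (0:ℝ)).mul_const g).exp
      simpa using h
    have hsl := hasDerivAt_iff_tendsto_slope.mp hd
    have he' : Tendsto e atTop (𝓝[≠] (0:ℝ)) :=
      tendsto_nhdsWithin_of_tendsto_nhds_of_eventually_within _ hlim0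
        (Filter.Eventually.of_forall fun n => (he0 n).ne')
    have := hsl.comp he'
    convert this using 2 with n
    simp [slope_def_field]
  have hptwise : ∀ p : Z × Z, Tendsto (fun n => F n p) atTop
      (𝓝 (φ p.1 * (starRingEnd ℂ) (φ p.2) * ((G p : ℝ) : ℂ))) := by
    intro p
    have h1 := hslope (G p : ℝ) (G p).coe_nonneg
    have h2 : Tendsto (fun n => (((Real.exp (e n * (G p : ℝ)) - 1) / e n : ℝ) : ℂ)) atTop
        (𝓝 ((G p : ℝ) : ℂ)) := (Complex.continuous_ofReal.tendsto _).comp h1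
    exact tendsto_const_nhds.mul h2
  -- the dominating function
  set bound : Z × Z → ℝ := fun p => M * M * ((2 / ε₀) * Real.exp (ε₀ * (G p : ℝ))) with hbdef
  have hbound_int : Integrable bound (μ.prod μ) := (hint.const_mul _).const_mul _
  have hFbound : ∀ n, ∀ p : Z × Z, ‖F n p‖ ≤ bound p := by
    intro n p
    set g : ℝ := (G p : ℝ) with hgdef
    have hg0 : 0 ≤ g := (G p).coe_nonneg
    have hε := he0 n
    have hexp1 : 1 ≤ Real.exp (e n * g) := Real.one_le_exp (by positivity)
    -- exp x - 1 ≤ x exp x for x = e n * g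
    have key : Real.exp (e n * g) - 1 ≤ (e n * g) * Real.exp (e n * g) := by
      have h := Real.add_one_le_exp (-(e n * g))
      have hp := Real.exp_pos (e n * g)
      have hm : Real.exp (e n * g) * Real.exp (-(e n * g)) = 1 := by
        rw [← Real.exp_add]; simp
      nlinarith
    have step1 : (Real.exp (e n * g) - 1) / e n ≤ g * Real.exp (e n * g) := by
      rw [div_le_iff₀ hε]
      calc Real.exp (e n * g) - 1 ≤ (e n * g) * Real.exp (e n * g) := key
        _ = g * Real.exp (e n * g) * e n := by ring
    have step2 : Real.exp (e n * g) ≤ Real.exp ((ε₀ / 2) * g) :=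
      Real.exp_le_exp.mpr (mul_le_mul_of_nonneg_right (heε₀ n) hg0)
    have step3 : g ≤ (2 / ε₀) * Real.exp ((ε₀ / 2) * g) := by
      have h := Real.add_one_le_exp ((ε₀ / 2) * g)
      calc g = (2 / ε₀) * ((ε₀ / 2) * g) := by field_simp
        _ ≤ (2 / ε₀) * Real.exp ((ε₀ / 2) * g) :=
            mul_le_mul_of_nonneg_left (by linarith) (by positivity)
    have step4 : g * Real.exp (e n * g) ≤ (2 / ε₀) * Real.exp (ε₀ * g) := by
      calc g * Real.exp (e n * g) ≤ (2 / ε₀) * Real.exp ((ε₀ / 2) * g) * Real.exp ((ε₀ / 2) * g) := by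
            apply mul_le_mul step3 step2 (Real.exp_pos _).le (by positivity)
        _ = (2 / ε₀) * Real.exp (ε₀ * g) := by
            rw [mul_assoc, ← Real.exp_add]; ring_nf
    have hq0 : 0 ≤ (Real.exp (e n * g) - 1) / e n := by
      apply div_nonneg _ hε.le; linarith
    have hnorm : ‖F n p‖ = ‖φ p.1 * (starRingEnd ℂ) (φ p.2)‖ * ((Real.exp (e n * g) - 1) / e n) := by
      rw [hFdef]
      rw [norm_mul, Complex.norm_real, Real.norm_eq_abs, abs_of_nonneg hq0]
    rw [hnorm, hbdef]
    have h2 := hM0 p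
    have h3 : (0:ℝ) ≤ ‖φ p.1 * (starRingEnd ℂ) (φ p.2)‖ := norm_nonneg _
    have h4 : (Real.exp (e n * g) - 1) / e n ≤ (2 / ε₀) * Real.exp (ε₀ * g) :=
      step1.trans step4
    have h5 : (0:ℝ) ≤ (2 / ε₀) * Real.exp (ε₀ * g) := by positivity
    nlinarith
  have hFmeas : ∀ n, AEStronglyMeasurable (F n) (μ.prod μ) := by
    intro n
    exact (hφφ_meas.mul (Complex.measurable_ofReal.comp
      (((hG.coe_nnreal_real.const_mul (e n)).exp.sub measurable_const).div_const (e n)))).aestronglyMeasurable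
  -- dominated convergence
  have hDCT : Tendsto (fun n => ∫ p, F n p ∂(μ.prod μ)) atTop
      (𝓝 (∫ p : Z × Z, φ p.1 * (starRingEnd ℂ) (φ p.2) * ((G p : ℝ) : ℂ) ∂(μ.prod μ))) := by
    refine tendsto_integral_of_dominated_convergence bound hFmeas hbound_int
      (fun n => Filter.Eventually.of_forall (hFbound n))
      (Filter.Eventually.of_forall hptwise)
  -- conclude
  set I : ℂ := ∫ p : Z × Z, φ p.1 * (starRingEnd ℂ) (φ p.2) * ((G p : ℝ) : ℂ) ∂(μ.prod μ) with hIdef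
  have hseq : Tendsto (fun n => ((r n / e n : ℝ) : ℂ)) atTop (𝓝 I) := by
    have := hDCT
    simp only [hFval] at this
    exact this
  have hre : Tendsto (fun n => r n / e n) atTop (𝓝 I.re) :=
    (Complex.continuous_re.tendsto _).comp hseq
  have hIim : I.im = 0 := by
    have h := (Complex.continuous_im.tendsto I).comp hseq
    simp only [Function.comp_def, Complex.ofReal_im] at h
    exact tendsto_nhds_unique h tendsto_const_nhds

  refine ⟨I.re, ?_, ?_⟩
  · exact ge_of_tendsto' hre fun n => div_nonneg (hr0 n) (he0 n).le
  · exact (Complex.ext (by simp) (by simp [hIim])).symm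
end

section
/- Let G be a group, H a complex Hilbert space, and π a unitary representation of G on H, i.e. a group homomorphism from G to the group of linear isometric equivalences of H. Let b : G → H satisfy the cocycle identity b(gh) = π(g)·b(h) + b(g) for all g, h ∈ G. Let S ⊆ G be a finite subset closed under inversion and β : G → ℝ a nonnegative function supported in S with β(g⁻¹) = β(g) for all g. Then for every w ∈ H, ∑_{g ∈ S} β(g)·⟪b(g), w − π(g)w⟫ = 2·⟪∑_{g ∈ S} β(g)·b(g), w⟫. -/
open scoped ComplexInnerProductSpace

/-- For a unitary representation `π` of a group `G` on a complex Hilbert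
space `H`, a cocycle `b : G → H`, and a nonnegative symmetric finitely supported weight
`β`, one has `∑_{g ∈ S} β g ⟪b g, w − π g w⟫ = 2 ⟪∑_{g ∈ S} β g • b g, w⟫`. -/
theorem stmt5 {G : Type*} [Group G]
    {H : Type*} [NormedAddCommGroup H] [InnerProductSpace ℂ H] [CompleteSpace H]
    (π : G →* (H ≃ₗᵢ[ℂ] H))
    (b : G → H) (hb : ∀ g h : G, b (g * h) = π g (b h) + b g)
    (S : Finset G) (hSinv : ∀ g ∈ S, g⁻¹ ∈ S)
    (β : G → ℝ) (hβ0 : ∀ g : G, 0 ≤ β g)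
    (hβsupp : ∀ g : G, β g ≠ 0 → g ∈ S)
    (hβsymm : ∀ g : G, β g⁻¹ = β g)
    (w : H) :
    ∑ g ∈ S, (β g : ℂ) * ⟪b g, w - π g w⟫ = 2 * ⟪(∑ g ∈ S, β g • b g), w⟫ := by
  have hbe : b 1 = 0 := by
    have h := hb 1 1
    simp only [one_mul, map_one, LinearIsometryEquiv.coe_one, id_eq] at h
    exact add_eq_left.mp h.symm
  have hinv : ∀ g : G, b g⁻¹ = -(π g⁻¹ (b g)) := by
    intro g
    have h := hb g⁻¹ g
    rw [inv_mul_cancel, hbe] at h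
    exact eq_neg_of_add_eq_zero_right h.symm
  -- inner with π g w
  have key : ∀ g : G, ⟪b g, π g w⟫ = -⟪b g⁻¹, w⟫ := by
    intro g
    have h1 : ⟪π g⁻¹ (b g), π g⁻¹ ((π g) w)⟫ = ⟪b g, (π g) w⟫ :=
      LinearIsometryEquiv.inner_map_map _ _ _
    have h2 : π g⁻¹ ((π g) w) = w := by
      have : π g⁻¹ * π g = 1 := by rw [← map_mul, inv_mul_cancel, map_one]
      calc π g⁻¹ ((π g) w) = ((π g⁻¹) * (π g)) w := rfl
        _ = w := by rw [this]; rfl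
    rw [h2] at h1
    rw [← h1, hinv g, inner_neg_left, neg_neg]
  have lhs_eq : ∑ g ∈ S, (β g : ℂ) * ⟪b g, w - π g w⟫
      = ∑ g ∈ S, (β g : ℂ) * ⟪b g, w⟫ + ∑ g ∈ S, (β g : ℂ) * ⟪b g⁻¹, w⟫ := by
    rw [← Finset.sum_add_distrib]
    refine Finset.sum_congr rfl fun g _ => ?_
    rw [inner_sub_right, key g]
    ring
  have reindex : ∑ g ∈ S, (β g : ℂ) * ⟪b g⁻¹, w⟫ = ∑ g ∈ S, (β g : ℂ) * ⟪b g, w⟫ := by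
    refine Finset.sum_nbij' (fun g => g⁻¹) (fun g => g⁻¹) (fun g hg => hSinv g hg)
      (fun g hg => hSinv g hg) (fun g _ => inv_inv g) (fun g _ => inv_inv g) ?_
    intro g _
    simp [hβsymm]
  have rhs_eq : ⟪(∑ g ∈ S, β g • b g), w⟫ = ∑ g ∈ S, (β g : ℂ) * ⟪b g, w⟫ := by
    rw [sum_inner]
    refine Finset.sum_congr rfl fun g _ => ?_
    rw [← Complex.coe_smul, inner_smul_left, Complex.conj_ofReal]
  rw [lhs_eq, reindex, rhs_eq]
  ring
end

section
/- Let G be a group, H a complex Hilbert space, and π a unitary representation of G on H, i.e. a group homomorphism from G to the group of linear isometric equivalences of H. Let b : G → H satisfy the cocycle identity b(gh) = π(g)·b(h) + b(g) for all g, h ∈ G. Let S ⊆ G be a finite subset closed under inversion and β : G → ℝ a nonnegative function supported in S with β(g⁻¹) = β(g) for all g. If b is β-harmonic, i.e. ∑_{g ∈ S} β(g)·b(g) = 0, then for every w ∈ H, ∑_{g ∈ S} β(g)·⟪b(g), w − π(g)w⟫ = 0; that is, b is β-orthogonal to every coboundary ∂_w(g) = w − π(g)w. -/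
open scoped ComplexInnerProductSpace

/-- A `β`-harmonic cocycle (`∑_{g ∈ S} β g • b g = 0`) for a unitary
representation `π` of `G` on a complex Hilbert space is `β`-orthogonal to every
coboundary `∂_w(g) = w − π g w`. -/
theorem stmt6 {G : Type*} [Group G]
    {H : Type*} [NormedAddCommGroup H] [InnerProductSpace ℂ H] [CompleteSpace H]
    (π : G →* (H ≃ₗᵢ[ℂ] H))
    (b : G → H) (hb : ∀ g h : G, b (g * h) = π g (b h) + b g)
    (S : Finset G) (hSinv : ∀ g ∈ S, g⁻¹ ∈ S)
    (β : G → ℝ) (hβ0 : ∀ g : G, 0 ≤ β g)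
    (hβsupp : ∀ g : G, β g ≠ 0 → g ∈ S)
    (hβsymm : ∀ g : G, β g⁻¹ = β g)
    (hharm : ∑ g ∈ S, β g • b g = 0)
    (w : H) :
    ∑ g ∈ S, (β g : ℂ) * ⟪b g, w - π g w⟫ = 0 := by
  have hb1 : b 1 = 0 := by
    have h := hb 1 1
    simpa using h
  have hinv : ∀ g : G, b g = - (π g) (b g⁻¹) := by
    intro g
    have h := hb g g⁻¹
    rw [mul_inv_cancel, hb1] at h
    exact eq_neg_of_add_eq_zero_right h.symm
  have hterm : ∀ g : G, (β g : ℂ) * ⟪b g, w - π g w⟫ =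
      (β g : ℂ) * ⟪b g, w⟫ + (β g : ℂ) * ⟪b g⁻¹, w⟫ := by
    intro g
    have h : ⟪b g, (π g) w⟫ = - ⟪b g⁻¹, w⟫ := by
      conv_lhs => rw [hinv g]
      rw [inner_neg_left, (π g).inner_map_map]
    rw [inner_sub_right, h]
    ring
  rw [Finset.sum_congr rfl (fun g _ => hterm g), Finset.sum_add_distrib]
  have h1 : ∑ g ∈ S, (β g : ℂ) * ⟪b g, w⟫ = 0 := by
    have h : ∑ g ∈ S, (β g : ℂ) * ⟪b g, w⟫ = ⟪∑ g ∈ S, β g • b g, w⟫ := by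
      rw [sum_inner]
      refine Finset.sum_congr rfl fun g _ => ?_
      rw [← Complex.coe_smul, inner_smul_left, Complex.conj_ofReal]
    rw [h, hharm, inner_zero_left]
  have h2 : ∑ g ∈ S, (β g : ℂ) * ⟪b g⁻¹, w⟫ = ∑ g ∈ S, (β g : ℂ) * ⟪b g, w⟫ := by
    refine Finset.sum_equiv (Equiv.inv G) (fun g => ?_) (fun g _ => ?_)
    · exact ⟨hSinv g, fun h => by simpa using hSinv g⁻¹ h⟩
    · simp [hβsymm]
  rw [h2, h1]
  simp
end
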